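/- For any subgroup Γ of ℝ^n, the double dual satisfies Γ** = closure(Γ), the topological closure of Γ in ℝ^n. -/

import Mathlib

open Submodule

variable {E : Type*} [NormedAddCommGroup E] [InnerProductSpace ℝ E] [FiniteDimensional ℝ E]

/-- The largest subspace contained in a subgroup `H`. -/
def lineSub (H : AddSubgroup E) : Submodule ℝ E where
  carrier := {v | ∀ t : ℝ, t • v ∈ H}
  add_mem' := fun hv hw t => by simpa [smul_add] using H.add_mem (hv t) (hw t)
  zero_mem' := fun t => by simpa using H.zero_mem
  smul_mem' := fun c v hv t => by simpa [smul_smul] using hv (t * c)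

lemma lineSub_le (H : AddSubgroup E) : (lineSub H : Set E) ⊆ H := fun v hv => by
  simpa using hv 1

lemma exists_norm_pos (H : AddSubgroup E) (hc : IsClosed (H : Set E)) :
    ∃ ε > (0:ℝ), ∀ z ∈ H, z ∈ (lineSub H)ᗮ → ‖z‖ < ε → z = 0 := by
  by_contra hcon
  push_neg at hcon
  choose z hzH hzW hznorm hzne using fun k : ℕ => hcon (1/(k+1)) (by positivity)
  have hz0 : ∀ k, ‖z k‖ ≠ 0 := fun k => norm_ne_zero_iff.mpr (hzne k)
  set u : ℕ → E := fun k => ‖z k‖⁻¹ • z k with hu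
  have hun : ∀ k, u k ∈ Metric.sphere (0:E) 1 := by
    intro k
    simp [hu, norm_smul, inv_mul_cancel₀ (hz0 k)]
  obtain ⟨a, ha, φ, hφ, hconv⟩ := (isCompact_sphere (0:E) 1).tendsto_subseq hun
  have hrt : Filter.Tendsto (fun k => ‖z (φ k)‖) Filter.atTop (nhds 0) := by
    refine squeeze_zero (fun k => norm_nonneg _) (fun k => (hznorm (φ k)).le.trans ?_)
      tendsto_one_div_add_atTop_nhds_zero_nat
    gcongr
    exact_mod_cast (hφ.id_le k)
  have haV : a ∈ lineSub H := by
    intro t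
    have hmem : ∀ k, ((⌊t / ‖z (φ k)‖⌋ : ℝ) * ‖z (φ k)‖) • u (φ k) ∈ H := by
      intro k
      have : ((⌊t / ‖z (φ k)‖⌋ : ℝ) * ‖z (φ k)‖) • u (φ k) = ⌊t / ‖z (φ k)‖⌋ • z (φ k) := by
        rw [← Int.cast_smul_eq_zsmul ℝ, hu, smul_smul, mul_assoc,
          mul_inv_cancel₀ (hz0 (φ k)), mul_one]
      rw [this]
      exact AddSubgroup.zsmul_mem H (hzH (φ k)) _
    have hct : Filter.Tendsto (fun k => (⌊t / ‖z (φ k)‖⌋ : ℝ) * ‖z (φ k)‖)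
        Filter.atTop (nhds t) := by
      have h1 : ∀ k, |(⌊t / ‖z (φ k)‖⌋ : ℝ) * ‖z (φ k)‖ - t| ≤ ‖z (φ k)‖ := by
        intro k
        have h2 : (⌊t / ‖z (φ k)‖⌋ : ℝ) * ‖z (φ k)‖ - t
            = ((⌊t / ‖z (φ k)‖⌋ : ℝ) - t / ‖z (φ k)‖) * ‖z (φ k)‖ := by
          rw [sub_mul, div_mul_cancel₀ _ (hz0 (φ k))]
        rw [h2, abs_mul, abs_of_nonneg (norm_nonneg _)]
        have h3 : |(⌊t / ‖z (φ k)‖⌋ : ℝ) - t / ‖z (φ k)‖| ≤ 1 := by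
          rw [abs_sub_comm, abs_of_nonneg (sub_nonneg.mpr (Int.floor_le _))]
          linarith [Int.lt_floor_add_one (t / ‖z (φ k)‖)]
        nlinarith [norm_nonneg (z (φ k))]
      have := squeeze_zero (fun k => abs_nonneg _) h1 hrt
      have := Filter.Tendsto.add_const t ((tendsto_zero_iff_abs_tendsto_zero _).mpr this)
      simpa using this
    have hlim : Filter.Tendsto (fun k => ((⌊t / ‖z (φ k)‖⌋ : ℝ) * ‖z (φ k)‖) • u (φ k))
        Filter.atTop (nhds (t • a)) := hct.smul hconv
    exact hc.mem_of_tendsto hlim (Filter.Eventually.of_forall hmem)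
  have haW : a ∈ (lineSub H)ᗮ := by
    refine (lineSub H).isClosed_orthogonal.mem_of_tendsto hconv
      (Filter.Eventually.of_forall fun k => ?_)
    exact Submodule.smul_mem _ _ (hzW (φ k))
  have : a = 0 := by
    have := haW a haV
    rwa [real_inner_self_eq_norm_sq, pow_eq_zero_iff (by norm_num), norm_eq_zero] at this
  simp [this] at ha

lemma key_discrete (H : AddSubgroup E) (hc : IsClosed (H : Set E)) :
    DiscreteTopology
      (AddSubgroup.toIntSubmodule (H ⊓ ((lineSub H)ᗮ).toAddSubgroup)) := by
  obtain ⟨ε, hε, hsep⟩ := exists_norm_pos H hc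
  refine discreteTopology_iff_isOpen_singleton_zero.mpr ⟨Metric.ball 0 ε, Metric.isOpen_ball, ?_⟩
  ext z
  simp only [Set.mem_preimage, mem_ball_zero_iff, Set.mem_singleton_iff]
  constructor
  · intro hz
    have hm := z.2
    rw [← SetLike.mem_coe, AddSubgroup.coe_toIntSubmodule, SetLike.mem_coe,
      AddSubgroup.mem_inf, Submodule.mem_toAddSubgroup] at hm
    exact Subtype.ext (hsep z.1 hm.1 hm.2 hz)
  · rintro rfl
    simpa using hε

lemma inner_zero_of_orth {K : Submodule ℝ E} {y m : E} (hy : y ∈ Kᗮ) (hm : m ∈ K) :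
    (inner ℝ y m : ℝ) = 0 := by
  rw [real_inner_comm]
  exact (Submodule.mem_orthogonal K y).mp hy m hm

lemma exists_dual_of_not_mem (H : AddSubgroup E) (hc : IsClosed (H : Set E)) {x : E}
    (hx : x ∉ H) :
    ∃ y : E, (∀ h ∈ H, ∃ k : ℤ, (inner ℝ y h : ℝ) = k) ∧ ∀ k : ℤ, (inner ℝ y x : ℝ) ≠ k := by
  classical
  set V := lineSub H with hV
  set L : Submodule ℤ E := AddSubgroup.toIntSubmodule (H ⊓ Vᗮ.toAddSubgroup) with hL
  have hLmem : ∀ z : E, z ∈ L ↔ z ∈ H ∧ z ∈ Vᗮ := by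
    intro z
    rw [hL, ← SetLike.mem_coe, AddSubgroup.coe_toIntSubmodule, SetLike.mem_coe,
      AddSubgroup.mem_inf, Submodule.mem_toAddSubgroup]
  have hdisc : DiscreteTopology L := key_discrete H hc
  set U : Submodule ℝ E := span ℝ (L : Set E) with hU
  have hLU : (L : Set E) ⊆ U := subset_span
  have hUW : U ≤ Vᗮ := span_le.mpr (fun z hz => ((hLmem z).mp hz).2)
  -- decompose x
  set w : E := x - (orthogonalProjection V x : E) with hw
  have hwW : w ∈ Vᗮ := Submodule.sub_starProjection_mem_orthogonal (K := V) x
  have hwL : w ∉ L := by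
    intro hmem
    refine hx ?_
    have : x = (orthogonalProjection V x : E) + w := by rw [hw]; abel
    rw [this]
    exact H.add_mem (lineSub_le H (orthogonalProjection V x).2) ((hLmem w).mp hmem).1
  -- it suffices to find y orthogonal to V, integral on L, non-integral on w
  suffices hsuff : ∃ y ∈ Vᗮ, (∀ l ∈ L, ∃ k : ℤ, (inner ℝ y l : ℝ) = k) ∧
      ∀ k : ℤ, (inner ℝ y w : ℝ) ≠ k by
    obtain ⟨y, hyW, hyL, hyw⟩ := hsuff
    refine ⟨y, fun h hh => ?_, fun k hk => hyw k ?_⟩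
    · have hdec : h = (orthogonalProjection V h : E) + (h - (orthogonalProjection V h : E)) := by
        abel
      have hl : h - (orthogonalProjection V h : E) ∈ L := by
        refine (hLmem _).mpr ⟨H.sub_mem hh (lineSub_le H (orthogonalProjection V h).2),
          Submodule.sub_starProjection_mem_orthogonal (K := V) h⟩
      obtain ⟨k, hk⟩ := hyL _ hl
      refine ⟨k, ?_⟩
      rw [hdec, inner_add_right, inner_zero_of_orth hyW (orthogonalProjection V h).2, zero_add, hk]
    · have hdec : x = (orthogonalProjection V x : E) + w := by rw [hw]; abel
      rw [hdec, inner_add_right, inner_zero_of_orth hyW (orthogonalProjection V x).2, zero_add] at hk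
      exact hk
  by_cases hwU : w ∈ U
  · -- w lies in the span of the lattice L : use a dual basis vector of the lattice
    set L' : Submodule ℤ U := ZLattice.comap ℝ L U.subtype with hL'
    have hdisc' : DiscreteTopology L' :=
      ZLattice.comap_discreteTopology ℝ L continuous_subtype_val (injective_subtype U)
    have himg : U.subtype '' (L' : Set U) = L := by
      rw [hL', ZLattice.coe_comap]
      rw [Set.image_preimage_eq_inter_range]
      have : Set.range ⇑U.subtype = (U : Set E) := Subtype.range_coe_subtype
      rw [this]
      exact Set.inter_eq_self_of_subset_left hLU
    have hzl : IsZLattice ℝ L' := ⟨by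
      apply Submodule.map_injective_of_injective (injective_subtype U)
      rw [Submodule.map_span, Submodule.map_top, range_subtype, himg]⟩
    have hfree : Module.Free ℤ L' := inferInstance
    have hfin : Module.Finite ℤ L' := inferInstance
    set b := Module.Free.chooseBasis ℤ L' with hb
    set B := b.ofZLatticeBasis ℝ L' with hB
    set w' : U := ⟨w, hwU⟩ with hw'def
    have hw' : w' ∉ L' := fun h => hwL h
    have hex : ∃ i, ∀ k : ℤ, (B.repr w' i : ℝ) ≠ (k : ℝ) := by
      by_contra hcon
      push_neg at hcon
      choose c hcr using hcon
      refine hw' ?_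
      have hdec : w' = ∑ i, c i • (b i : U) := by
        conv_lhs => rw [← B.sum_repr w']
        refine Finset.sum_congr rfl fun i _ => ?_
        rw [hcr i, Int.cast_smul_eq_zsmul, Module.Basis.ofZLatticeBasis_apply]
      rw [hdec]
      exact Submodule.sum_mem L' fun i _ => L'.smul_mem (c i) (b i).2
    obtain ⟨i, hi⟩ := hex
    set y' : U := (InnerProductSpace.toDual ℝ U).symm
      (LinearMap.toContinuousLinearMap (B.coord i)) with hy'
    have hy'app : ∀ u : U, (inner ℝ y' u : ℝ) = B.repr u i := by
      intro u
      rw [hy', InnerProductSpace.toDual_symm_apply]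
      simp [Module.Basis.coord_apply]
    refine ⟨(y' : E), hUW y'.2, fun l hl => ?_, fun k hk => hi k ?_⟩
    · set l' : U := ⟨l, hLU hl⟩ with hl'def
      have hl' : l' ∈ L' := hl
      refine ⟨b.repr ⟨l', hl'⟩ i, ?_⟩
      have h1 : (inner ℝ (y' : E) l : ℝ) = (inner ℝ y' l' : ℝ) := (Submodule.coe_inner U y' l').symm
      rw [h1, hy'app l']
      exact b.ofZLatticeBasis_repr_apply ℝ L' ⟨l', hl'⟩ i
    · have h1 : (inner ℝ (y' : E) w : ℝ) = (inner ℝ y' w' : ℝ) := (Submodule.coe_inner U y' w').symm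
      rw [h1, hy'app w'] at hk
      exact hk
  · -- w is not in the span of L: use a vector orthogonal to U
    set u₀ : E := w - (orthogonalProjection U w : E) with hu₀
    have hu₀W : u₀ ∈ Vᗮ := Submodule.sub_mem _ hwW (hUW (orthogonalProjection U w).2)
    have hu₀U : u₀ ∈ Uᗮ := Submodule.sub_starProjection_mem_orthogonal (K := U) w
    have hu₀ne : u₀ ≠ 0 := by
      intro h0
      refine hwU ?_
      have : w = (orthogonalProjection U w : E) := by
        have := sub_eq_zero.mp h0
        rw [hu₀] at h0
        linear_combination (norm := module) h0
      rw [this]; exact (orthogonalProjection U w).2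
    refine ⟨(2 * ‖u₀‖^2)⁻¹ • u₀, Submodule.smul_mem _ _ hu₀W, fun l hl => ⟨0, ?_⟩,
      fun k hk => ?_⟩
    · rw [real_inner_smul_left, inner_zero_of_orth hu₀U (hLU hl), mul_zero, Int.cast_zero]
    · have hin : (inner ℝ u₀ w : ℝ) = ‖u₀‖^2 := by
        have : w = u₀ + (orthogonalProjection U w : E) := by rw [hu₀]; abel
        rw [this, inner_add_right, inner_zero_of_orth hu₀U (orthogonalProjection U w).2,
          real_inner_self_eq_norm_sq, add_zero]
      have hnorm : ‖u₀‖^2 ≠ 0 := pow_ne_zero _ (norm_ne_zero_iff.mpr hu₀ne)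
      rw [real_inner_smul_left, hin, inv_mul_eq_div] at hk
      have h2 : (2 * (k:ℝ)) = 1 := by
        rw [div_eq_iff (by positivity : (2:ℝ) * ‖u₀‖^2 ≠ 0)] at hk
        have h3 : (2 * (k:ℝ) - 1) * ‖u₀‖^2 = 0 := by ring_nf; ring_nf at hk; linarith
        rcases mul_eq_zero.mp h3 with h | h
        · linarith
        · exact absurd h hnorm
      have : ((2 * k : ℤ) : ℝ) = ((1:ℤ):ℝ) := by push_cast; linarith
      have := Int.cast_injective this
      omega

def dualSet {n : ℕ} (S : Set (EuclideanSpace ℝ (Fin n))) : Set (EuclideanSpace ℝ (Fin n)) :=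
  {x | ∀ g ∈ S, ∃ k : ℤ, (inner ℝ x g : ℝ) = (k : ℝ)}

/-- for any subgroup `Γ ⊆ ℝⁿ`, the double dual `Γ**` equals the
topological closure of `Γ`. -/
theorem stmt10 {n : ℕ} (Γ : AddSubgroup (EuclideanSpace ℝ (Fin n))) :
    dualSet (dualSet (Γ : Set _)) = closure (Γ : Set (EuclideanSpace ℝ (Fin n))) := by
  set H := Γ.topologicalClosure with hH
  have hHc : (H : Set (EuclideanSpace ℝ (Fin n))) = closure (Γ : Set _) := Γ.topologicalClosure_coe
  have hclosed : IsClosed (H : Set (EuclideanSpace ℝ (Fin n))) :=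
    Γ.isClosed_topologicalClosure
  apply Set.Subset.antisymm
  · -- Γ** ⊆ closure Γ
    intro x hx
    rw [← hHc]
    by_contra hxH
    obtain ⟨y, hy1, hy2⟩ := exists_dual_of_not_mem H hclosed hxH
    have hyd : y ∈ dualSet (Γ : Set _) := by
      intro g hg
      exact hy1 g (Γ.le_topologicalClosure hg)
    obtain ⟨k, hk⟩ := hx y hyd
    exact hy2 k (by rwa [real_inner_comm])
  · -- closure Γ ⊆ Γ**
    intro x hx g hg
    have hC : IsClosed {z : EuclideanSpace ℝ (Fin n) | ∃ k : ℤ, (inner ℝ z g : ℝ) = (k : ℝ)} := by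
      have : {z : EuclideanSpace ℝ (Fin n) | ∃ k : ℤ, (inner ℝ z g : ℝ) = (k : ℝ)}
          = (fun z : EuclideanSpace ℝ (Fin n) => (inner ℝ z g : ℝ)) ⁻¹'
            (Set.range ((↑) : ℤ → ℝ)) := by
        ext z
        simp [Set.mem_preimage, Set.mem_range, eq_comm]
      rw [this]
      exact Int.isClosedEmbedding_coe_real.isClosed_range.preimage
        (continuous_id.inner continuous_const)
    have hsub : (Γ : Set _) ⊆ {z : EuclideanSpace ℝ (Fin n) |
        ∃ k : ℤ, (inner ℝ z g : ℝ) = (k : ℝ)} := by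
      intro h hh
      obtain ⟨k, hk⟩ := hg h hh
      exact ⟨k, by rwa [real_inner_comm]⟩
    exact closure_minimal hsub hC hx
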